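/- Let A = (z^1,…,z^M) be a word over 𝒞 ∪ 𝒮 whose FCFS directed matching leaves exactly K unmatched customer entries and L unmatched server entries. If c ∈ 𝒞 is a customer type, then the FCFS directed matching of the word (c, z^1,…,z^M) leaves either exactly K+1 unmatched customer entries and L unmatched server entries, or exactly K unmatched customer entries and L−1 unmatched server entries; in particular it leaves no more than K+1 unmatched customers and no more than L unmatched servers. -/

import Mathlib

/-- FCFS directed matching of a finite word, scanning left to right.
`fcfsAux R rest n q` processes the remaining word `rest`, where `n` is the position of
the first entry of `rest` in the whole word, and `q` is the ordered queue of
still-unmatched customer entries (position, type) seen so far.  A server entry is matched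
to the earliest unmatched compatible customer before it, if any; the output is the list
of matched pairs of positions `(customer position, server position)`. -/
def fcfsAux {C S : Type*} (R : C → S → Prop) [∀ c s, Decidable (R c s)] :
    List (C ⊕ S) → ℕ → List (ℕ × C) → List (ℕ × ℕ)
  | [], _, _ => []
  | Sum.inl c :: rest, n, q => fcfsAux R rest (n + 1) (q ++ [(n, c)])
  | Sum.inr s :: rest, n, q =>
      match q.find? (fun p => decide (R p.2 s)) with
      | some p => (p.1, n) :: fcfsAux R rest (n + 1) (q.eraseP (fun p' => decide (R p'.2 s)))
      | none => fcfsAux R rest (n + 1) q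

/-- The matched pairs of positions of the FCFS directed matching of the word `w`. -/
def fcfsMatching {C S : Type*} (R : C → S → Prop) [∀ c s, Decidable (R c s)]
    (w : List (C ⊕ S)) : List (ℕ × ℕ) := fcfsAux R w 0 []

/-- Number of customer entries of a word. -/
def numC {C S : Type*} (w : List (C ⊕ S)) : ℕ := w.countP (fun z => z.isLeft)

/-- Number of server entries of a word. -/
def numS {C S : Type*} (w : List (C ⊕ S)) : ℕ := w.countP (fun z => z.isRight)

/-- Number of customer entries left unmatched by the FCFS directed matching. -/
def unmatchedC {C S : Type*} (R : C → S → Prop) [∀ c s, Decidable (R c s)]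
    (w : List (C ⊕ S)) : ℕ := numC w - (fcfsMatching R w).length

/-- Number of server entries left unmatched by the FCFS directed matching. -/
def unmatchedS {C S : Type*} (R : C → S → Prop) [∀ c s, Decidable (R c s)]
    (w : List (C ⊕ S)) : ℕ := numS w - (fcfsMatching R w).length

section
variable {C S : Type*} (R : C → S → Prop) [∀ c s, Decidable (R c s)]

lemma numC_inl (c : C) (w : List (C ⊕ S)) : numC (Sum.inl c :: w) = numC w + 1 := by
  simp [numC, List.countP_cons]

lemma numC_inr (s : S) (w : List (C ⊕ S)) : numC (Sum.inr s :: w) = numC w := by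
  simp [numC, List.countP_cons]

lemma numS_inl (c : C) (w : List (C ⊕ S)) : numS (Sum.inl c :: w) = numS w := by
  simp [numS, List.countP_cons]

lemma numS_inr (s : S) (w : List (C ⊕ S)) : numS (Sum.inr s :: w) = numS w + 1 := by
  simp [numS, List.countP_cons]

lemma fcfs_len_inv : ∀ (rest : List (C ⊕ S)) (n n' : ℕ) (q q' : List (ℕ × C)),
    q.map Prod.snd = q'.map Prod.snd →
    (fcfsAux R rest n q).length = (fcfsAux R rest n' q').length := by
  intro rest
  induction rest with
  | nil => intro n n' q q' h; rfl
  | cons z rest ih =>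
    intro n n' q q' h
    match z with
    | Sum.inl c =>
      simp only [fcfsAux]
      exact ih (n+1) (n'+1) _ _ (by simp [h])
    | Sum.inr s =>
      simp only [fcfsAux]
      have hf : Option.map Prod.snd (q.find? (fun p => decide (R p.2 s)))
          = Option.map Prod.snd (q'.find? (fun p => decide (R p.2 s))) := by
        have h1 := List.find?_map (p := fun x => decide (R x s)) (f := Prod.snd) (l := q)
        have h2 := List.find?_map (p := fun x => decide (R x s)) (f := Prod.snd) (l := q')
        simp only [Function.comp_def] at h1 h2
        rw [← h1, ← h2, h]
      cases hq : q.find? (fun p => decide (R p.2 s)) with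
      | none =>
        cases hq' : q'.find? (fun p => decide (R p.2 s)) with
        | none => dsimp only; exact ih (n+1) (n'+1) _ _ h
        | some p => rw [hq, hq'] at hf; simp at hf
      | some p =>
        cases hq' : q'.find? (fun p => decide (R p.2 s)) with
        | none => rw [hq, hq'] at hf; simp at hf
        | some p' =>
          dsimp only
          simp only [List.length_cons]
          have heq : (q.eraseP (fun p' => decide (R p'.2 s))).map Prod.snd
              = (q'.eraseP (fun p' => decide (R p'.2 s))).map Prod.snd := by
            have e1 := List.eraseP_map (p := fun x => decide (R x s)) (f := Prod.snd) (l := q)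
            have e2 := List.eraseP_map (p := fun x => decide (R x s)) (f := Prod.snd) (l := q')
            simp only [Function.comp_def] at e1 e2
            rw [← e1, ← e2, h]
          rw [ih (n+1) (n'+1) _ _ heq]

lemma fcfs_len_insert : ∀ (rest : List (C ⊕ S)) (n : ℕ) (x : ℕ × C) (q₁ q₂ : List (ℕ × C)),
    (fcfsAux R rest n (q₁ ++ x :: q₂)).length = (fcfsAux R rest n (q₁ ++ q₂)).length ∨
    (fcfsAux R rest n (q₁ ++ x :: q₂)).length = (fcfsAux R rest n (q₁ ++ q₂)).length + 1 := by
  intro rest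
  induction rest with
  | nil => intro n x q₁ q₂; left; rfl
  | cons z rest ih =>
    intro n x q₁ q₂
    match z with
    | Sum.inl c =>
      simp only [fcfsAux]
      have h1 : (q₁ ++ x :: q₂) ++ [(n, c)] = q₁ ++ x :: (q₂ ++ [(n, c)]) := by simp
      have h2 : (q₁ ++ q₂) ++ [(n, c)] = q₁ ++ (q₂ ++ [(n, c)]) := by simp
      rw [h1, h2]
      exact ih (n+1) x q₁ (q₂ ++ [(n,c)])
    | Sum.inr s =>
      simp only [fcfsAux]
      rw [List.find?_append, List.find?_append]
      cases hq1 : q₁.find? (fun p => decide (R p.2 s)) with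
      | some p =>
        have hmem := List.mem_of_find?_eq_some hq1
        have hp := List.find?_some hq1
        rw [Option.some_or, Option.some_or]
        dsimp only
        rw [List.eraseP_append_left (p := fun p' : ℕ × C => decide (R p'.2 s)) hp _ hmem,
            List.eraseP_append_left (p := fun p' : ℕ × C => decide (R p'.2 s)) hp _ hmem]
        rcases ih (n+1) x (q₁.eraseP (fun p' => decide (R p'.2 s))) q₂ with h | h
        · left; simp only [List.length_cons]; omega
        · right; simp only [List.length_cons]; omega
      | none =>
        have hq1' : ∀ a ∈ q₁, ¬ (fun p : ℕ × C => decide (R p.2 s)) a = true := by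
          intro a ha
          have := List.find?_eq_none.mp hq1 a ha
          simpa using this
        rw [Option.none_or, Option.none_or]
        by_cases hx : R x.2 s
        · have hfind : List.find? (fun p : ℕ × C => decide (R p.2 s)) (x :: q₂) = some x :=
            List.find?_cons_of_pos (by simpa using hx)
          rw [hfind]
          dsimp only
          have herase : (q₁ ++ x :: q₂).eraseP (fun p' => decide (R p'.2 s)) = q₁ ++ q₂ := by
            rw [List.eraseP_append_right _ hq1', List.eraseP_cons_of_pos (by simpa using hx)]
          rw [herase]
          cases hq2 : q₂.find? (fun p => decide (R p.2 s)) with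
          | none => dsimp only; right; simp
          | some p =>
            dsimp only
            obtain ⟨hp2, l₁, l₂, hq2eq, hl₁⟩ := List.find?_eq_some_iff_append.mp hq2
            have herase2 : (q₁ ++ q₂).eraseP (fun p' => decide (R p'.2 s))
                = (q₁ ++ l₁) ++ l₂ := by
              rw [List.eraseP_append_right _ hq1', hq2eq,
                  List.eraseP_append_right _ (fun a ha => by simpa using hl₁ a ha),
                  List.eraseP_cons_of_pos (p := fun p' : ℕ × C => decide (R p'.2 s)) hp2]
              simp
            rw [herase2]
            have hsplit : q₁ ++ q₂ = (q₁ ++ l₁) ++ p :: l₂ := by rw [hq2eq]; simp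
            rw [hsplit]
            rcases ih (n+1) p (q₁ ++ l₁) l₂ with h | h
            · left; simp only [List.length_cons]; omega
            · right; simp only [List.length_cons]; omega
        · have hfind : List.find? (fun p : ℕ × C => decide (R p.2 s)) (x :: q₂)
              = List.find? (fun p : ℕ × C => decide (R p.2 s)) q₂ :=
            List.find?_cons_of_neg (by simpa using hx)
          rw [hfind]
          cases hq2 : q₂.find? (fun p => decide (R p.2 s)) with
          | none => dsimp only; exact ih (n+1) x q₁ q₂
          | some p =>
            dsimp only
            have herase : (q₁ ++ x :: q₂).eraseP (fun p' => decide (R p'.2 s))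
                = q₁ ++ x :: q₂.eraseP (fun p' => decide (R p'.2 s)) := by
              rw [List.eraseP_append_right _ hq1', List.eraseP_cons_of_neg (by simpa using hx)]
            have herase2 : (q₁ ++ q₂).eraseP (fun p' => decide (R p'.2 s))
                = q₁ ++ q₂.eraseP (fun p' => decide (R p'.2 s)) :=
              List.eraseP_append_right _ hq1'
            rw [herase, herase2]
            rcases ih (n+1) x q₁ (q₂.eraseP (fun p' => decide (R p'.2 s))) with h | h
            · left; simp only [List.length_cons]; omega
            · right; simp only [List.length_cons]; omega

lemma fcfs_len_le_S : ∀ (rest : List (C ⊕ S)) (n : ℕ) (q : List (ℕ × C)),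
    (fcfsAux R rest n q).length ≤ numS rest := by
  intro rest
  induction rest with
  | nil => intro n q; simp [fcfsAux, numS]
  | cons z rest ih =>
    intro n q
    match z with
    | Sum.inl c =>
      rw [numS_inl]
      simp only [fcfsAux]
      exact ih (n+1) (q ++ [(n, c)])
    | Sum.inr s =>
      rw [numS_inr]
      simp only [fcfsAux]
      cases hq : q.find? (fun p => decide (R p.2 s)) with
      | some p =>
        dsimp only
        simp only [List.length_cons]
        have := ih (n+1) (q.eraseP (fun p' => decide (R p'.2 s)))
        omega
      | none =>
        dsimp only
        have := ih (n+1) q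
        omega

lemma fcfs_len_le_C : ∀ (rest : List (C ⊕ S)) (n : ℕ) (q : List (ℕ × C)),
    (fcfsAux R rest n q).length ≤ numC rest + q.length := by
  intro rest
  induction rest with
  | nil => intro n q; simp [fcfsAux]
  | cons z rest ih =>
    intro n q
    match z with
    | Sum.inl c =>
      rw [numC_inl]
      simp only [fcfsAux]
      have := ih (n+1) (q ++ [(n, c)])
      simp only [List.length_append, List.length_cons, List.length_nil] at this
      omega
    | Sum.inr s =>
      rw [numC_inr]
      simp only [fcfsAux]
      cases hq : q.find? (fun p => decide (R p.2 s)) with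
      | some p =>
        dsimp only
        simp only [List.length_cons]
        have hmem := List.mem_of_find?_eq_some hq
        have hp := List.find?_some hq
        have hlen := List.length_eraseP_of_mem (p := fun p' => decide (R p'.2 s)) hmem hp
        have hpos : 1 ≤ q.length := List.length_pos_iff.mpr (List.ne_nil_of_mem hmem)
        have := ih (n+1) (q.eraseP (fun p' => decide (R p'.2 s)))
        omega
      | none =>
        dsimp only
        have := ih (n+1) q
        omega

end

/-- Monotonicity, prepending a customer: if the FCFS directed matching of
`A` leaves exactly `K` unmatched customers and `L` unmatched servers, then prepending a
customer entry `c` leaves either exactly `K+1` unmatched customers and `L` unmatched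
servers, or exactly `K` unmatched customers and `L−1` unmatched servers; in particular no
more than `K+1` unmatched customers and no more than `L` unmatched servers. -/
theorem stmt8 {C S : Type*} [Fintype C] [Fintype S] [Nonempty C] [Nonempty S]
    (R : C → S → Prop) [∀ c s, Decidable (R c s)]
    (A : List (C ⊕ S)) (K L : ℕ)
    (hK : unmatchedC R A = K) (hL : unmatchedS R A = L) (c : C) :
    ((unmatchedC R (Sum.inl c :: A) = K + 1 ∧ unmatchedS R (Sum.inl c :: A) = L) ∨
      (unmatchedC R (Sum.inl c :: A) = K ∧ unmatchedS R (Sum.inl c :: A) + 1 = L)) ∧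
    unmatchedC R (Sum.inl c :: A) ≤ K + 1 ∧ unmatchedS R (Sum.inl c :: A) ≤ L := by
  subst hK hL
  have hrw : fcfsMatching R (Sum.inl c :: A) = fcfsAux R A 1 ([] ++ (0, c) :: []) := rfl
  have hinv : (fcfsAux R A 1 []).length = (fcfsMatching R A).length :=
    fcfs_len_inv R A 1 0 [] [] rfl
  have hkey := fcfs_len_insert R A 1 (0, c) [] []
  have hlen : (fcfsMatching R (Sum.inl c :: A)).length = (fcfsMatching R A).length ∨
      (fcfsMatching R (Sum.inl c :: A)).length = (fcfsMatching R A).length + 1 := by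
    rw [hrw]
    simpa [hinv] using hkey
  have h1 : (fcfsMatching R A).length ≤ numC A := by
    simpa [fcfsMatching] using fcfs_len_le_C R A 0 []
  have h2 : (fcfsMatching R (Sum.inl c :: A)).length ≤ numS A := by
    have := fcfs_len_le_S R A 1 ([] ++ (0, c) :: [])
    rw [hrw]; exact this
  have h3 : (fcfsMatching R A).length ≤ numS A := fcfs_len_le_S R A 0 []
  simp only [unmatchedC, unmatchedS, numC_inl, numS_inl]
  rcases hlen with h | h <;> rw [h] <;> omega
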